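/- Let Σ₀ = diag(α) ∈ ℝ^{m×m} be positive definite and Σ₁ = diag(β) ∈ ℝ^{n×n} positive semidefinite (n ≤ m). For every m×n matrix K such that Σ₁ − KᵀΣ₀⁻¹K is positive semidefinite, one has tr(K 𝟙_{n,m}) ≤ √(tr(Σ₀) tr(Σ₁)), where 𝟙_{n,m} is the n×m matrix of all ones. -/

import Mathlib

open Matrix Finset

theorem stmt7 (m n : ℕ) (h : n ≤ m) (α : Fin m → ℝ) (β : Fin n → ℝ)
    (hα : ∀ i, 0 < α i) (hβ : ∀ i, 0 ≤ β i)
    (K : Matrix (Fin m) (Fin n) ℝ)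
    (hschur : (Matrix.diagonal β - Kᵀ * (Matrix.diagonal α)⁻¹ * K).PosSemidef) :
    Matrix.trace (K * (Matrix.of fun (_ : Fin n) (_ : Fin m) => (1 : ℝ)))
      ≤ Real.sqrt ((∑ i, α i) * (∑ j, β j)) := by
  set w : Fin m → ℝ := fun i => ∑ j, K i j with hw
  have hDinv : (Matrix.diagonal α)⁻¹ = Matrix.diagonal (fun i => (α i)⁻¹) := by
    apply inv_eq_right_inv
    rw [Matrix.diagonal_mul_diagonal]
    convert Matrix.diagonal_one using 2
    exact funext fun i => mul_inv_cancel₀ (hα i).ne'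
  have hq := hschur.dotProduct_mulVec_nonneg (fun _ => (1 : ℝ))
  have hKv : K *ᵥ (fun _ => (1 : ℝ)) = w := by
    funext i; simp [Matrix.mulVec, dotProduct, hw]
  have key : ∑ i, (w i) ^ 2 * (α i)⁻¹ ≤ ∑ j, β j := by
    have h1 : star (fun _ => (1 : ℝ)) ⬝ᵥ
        ((Matrix.diagonal β - Kᵀ * (Matrix.diagonal α)⁻¹ * K) *ᵥ fun _ => (1 : ℝ))
        = (∑ j, β j) - ∑ i, (w i) ^ 2 * (α i)⁻¹ := by
      rw [Matrix.sub_mulVec, dotProduct_sub]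
      congr 1
      · simp [Matrix.mulVec, dotProduct, Matrix.diagonal]
      · rw [← Matrix.mulVec_mulVec, ← Matrix.mulVec_mulVec, hDinv]
        have hstar : star (fun _ => (1 : ℝ)) = (fun _ => (1 : ℝ) : Fin n → ℝ) := rfl
        rw [hstar, dotProduct_mulVec, Matrix.vecMul_transpose, hKv]
        simp [Matrix.mulVec, dotProduct, Matrix.diagonal, sq]
        congr 1
        funext i
        ring
    rw [h1] at hq
    linarith
  have hcs : (∑ i, w i) ^ 2 ≤ (∑ i, α i) * ∑ i, (w i) ^ 2 * (α i)⁻¹ :=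
    Finset.sum_sq_le_sum_mul_sum_of_sq_eq_mul Finset.univ
      (fun i _ => (hα i).le)
      (fun i _ => mul_nonneg (sq_nonneg _) (inv_nonneg.2 (hα i).le))
      (fun i _ => by rw [mul_comm (α i), mul_assoc, inv_mul_cancel₀ (hα i).ne', mul_one])
  have hsum : (∑ i, w i) ^ 2 ≤ (∑ i, α i) * ∑ j, β j := by
    refine hcs.trans ?_
    exact mul_le_mul_of_nonneg_left key (Finset.sum_nonneg fun i _ => (hα i).le)
  have htr : Matrix.trace (K * (Matrix.of fun (_ : Fin n) (_ : Fin m) => (1 : ℝ)))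
      = ∑ i, w i := by
    simp [Matrix.trace, Matrix.diag, Matrix.mul_apply, hw]
  rw [htr]
  rcases le_or_gt (∑ i, w i) 0 with hle | hpos
  · exact hle.trans (Real.sqrt_nonneg _)
  · rw [show (∑ i, w i) = Real.sqrt ((∑ i, w i) ^ 2) by
      rw [Real.sqrt_sq hpos.le]]
    exact Real.sqrt_le_sqrt hsum
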